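/- Let h : ℝ → ℝ be defined by h(α) = 12/(1−α)⁺ + 6/(αD)⁺ where D > 0 and 1/(t)⁺ := 1/t if t > 0 and +∞ otherwise. The minimum of h over α ∈ (0,1) (after optimizing the separating plane between two point clusters at distance D, with n = α(x₁−x₂)/‖x₁−x₂‖·scale) yields the closed-form value 12·(1 + 1/√D)², i.e., for two distinct points x₁, x₂ ∈ ℝ³ at distance D, min over separating planes p=(n,d) of [12/(1−‖n‖)⁺ + 3/((⟨x₁,n⟩+d))⁺ + 3/((−⟨x₂,n⟩−d))⁺] = 12(1 + 1/√D)². -/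

import Mathlib

open scoped RealInnerProductSpace ENNReal

/-- The globally supported barrier `1/(t)⁺`, valued `+∞` for `t ≤ 0`. -/
noncomputable def barrier (t : ℝ) : ℝ≥0∞ :=
  if 0 < t then ENNReal.ofReal (1 / t) else ⊤

lemma barrier_of_pos {t : ℝ} (ht : 0 < t) : barrier t = ENNReal.ofReal (1 / t) := if_pos ht

lemma barrier_of_nonpos {t : ℝ} (ht : ¬ 0 < t) : barrier t = ⊤ := if_neg ht

/-- Centered potential computation: for two distinct points `x₁, x₂ ∈ ℝ³` at distance `D > 0`,
the infimum over separating planes `p = (n, d)` of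
`12/(1−‖n‖)⁺ + 3/(⟨x₁,n⟩+d)⁺ + 3/(−⟨x₂,n⟩−d)⁺` equals `12(1 + 1/√D)²`. -/
theorem centered_potential_closed_form (x₁ x₂ : EuclideanSpace ℝ (Fin 3)) (D : ℝ)
    (hD : 0 < D) (hdist : ‖x₁ - x₂‖ = D) :
    (⨅ p : EuclideanSpace ℝ (Fin 3) × ℝ,
        12 * barrier (1 - ‖p.1‖) + 3 * barrier (⟪x₁, p.1⟫ + p.2)
          + 3 * barrier (-⟪x₂, p.1⟫ - p.2))
      = ENNReal.ofReal (12 * (1 + 1 / Real.sqrt D) ^ 2) := by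
  have ht : 0 < Real.sqrt D := Real.sqrt_pos.mpr hD
  set t := Real.sqrt D with htdef
  have ht2 : t ^ 2 = D := Real.sq_sqrt hD.le
  have ht0 : t ≠ 0 := ne_of_gt ht
  apply le_antisymm
  · -- upper bound at explicit point
    set α : ℝ := 1 / (1 + t) with hα
    have h1t : (0:ℝ) < 1 + t := by linarith
    have hα0 : 0 < α := by positivity
    have hα1 : α < 1 := by rw [hα, div_lt_one h1t]; linarith
    set n : EuclideanSpace ℝ (Fin 3) := (α / D) • (x₁ - x₂) with hn
    set d : ℝ := α * D / 2 - ⟪x₁, n⟫ with hd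
    refine le_trans (iInf_le _ (n, d)) ?_
    have hnorm : ‖n‖ = α := by
      rw [hn, norm_smul, hdist, Real.norm_eq_abs, abs_of_pos (by positivity)]
      field_simp
    have hinner : ⟪x₁ - x₂, n⟫ = α * D := by
      rw [hn, real_inner_smul_right, real_inner_self_eq_norm_sq, hdist]
      field_simp
    have hs : ⟪x₁, n⟫ + d = α * D / 2 := by rw [hd]; ring
    have hu : -⟪x₂, n⟫ - d = α * D / 2 := by
      have h12 : ⟪x₁, n⟫ - ⟪x₂, n⟫ = α * D := by rw [← inner_sub_left]; exact hinner
      rw [hd]; linarith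
    have hαD : (0:ℝ) < α * D / 2 := by positivity
    have hA : (0:ℝ) ≤ 12 * (1 / (1 - α)) :=
      mul_nonneg (by norm_num) (le_of_lt (one_div_pos.mpr (by linarith)))
    have hB : (0:ℝ) ≤ 3 * (1 / (α * D / 2)) :=
      mul_nonneg (by norm_num) (le_of_lt (one_div_pos.mpr hαD))
    rw [hnorm, hs, hu, barrier_of_pos (by linarith), barrier_of_pos hαD]
    rw [show (12:ℝ≥0∞) = ENNReal.ofReal 12 by norm_num,
        show (3:ℝ≥0∞) = ENNReal.ofReal 3 by norm_num,
        ← ENNReal.ofReal_mul (by norm_num), ← ENNReal.ofReal_mul (by norm_num),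
        ← ENNReal.ofReal_add hA hB, ← ENNReal.ofReal_add (add_nonneg hA hB) hB]
    apply ENNReal.ofReal_le_ofReal
    apply le_of_eq
    have h1α : 1 - α = t / (1 + t) := by rw [hα]; field_simp; ring
    have h2 : α * D = t ^ 2 / (1 + t) := by rw [hα, ← ht2]; ring
    rw [h1α, h2]
    field_simp
    ring
  · -- lower bound
    refine le_iInf fun p => ?_
    obtain ⟨n, d⟩ := p
    simp only
    by_cases h1 : 0 < 1 - ‖n‖
    · by_cases h2 : 0 < ⟪x₁, n⟫ + d
      · by_cases h3 : 0 < -⟪x₂, n⟫ - d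
        · set α : ℝ := ‖n‖ with hαdef
          set s : ℝ := ⟪x₁, n⟫ + d with hsdef
          set u : ℝ := -⟪x₂, n⟫ - d with hudef
          have hsu : s + u ≤ α * D := by
            have h12 : s + u = ⟪x₁ - x₂, n⟫ := by
              rw [hsdef, hudef, inner_sub_left]; ring
            have := real_inner_le_norm (x₁ - x₂) n
            rw [hdist] at this
            rw [h12]; linarith [this]
          have hα0 : 0 < α := by nlinarith [norm_nonneg n]
          have hA : (0:ℝ) ≤ 12 * (1 / (1 - α)) :=
            mul_nonneg (by norm_num) (le_of_lt (one_div_pos.mpr h1))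
          have hB : (0:ℝ) ≤ 3 * (1 / s) :=
            mul_nonneg (by norm_num) (le_of_lt (one_div_pos.mpr h2))
          have hC : (0:ℝ) ≤ 3 * (1 / u) :=
            mul_nonneg (by norm_num) (le_of_lt (one_div_pos.mpr h3))
          rw [barrier_of_pos h1, barrier_of_pos h2, barrier_of_pos h3]
          rw [show (12:ℝ≥0∞) = ENNReal.ofReal 12 by norm_num,
              show (3:ℝ≥0∞) = ENNReal.ofReal 3 by norm_num,
              ← ENNReal.ofReal_mul (by norm_num), ← ENNReal.ofReal_mul (by norm_num),
              ← ENNReal.ofReal_mul (by norm_num),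
              ← ENNReal.ofReal_add hA hB, ← ENNReal.ofReal_add (add_nonneg hA hB) hC]
          apply ENNReal.ofReal_le_ofReal
          have k1 : 12 / (α * D) ≤ 3 * (1 / s) + 3 * (1 / u) := by
            rw [mul_one_div, mul_one_div, div_add_div _ _ (ne_of_gt h2) (ne_of_gt h3),
              div_le_div_iff₀ (by positivity) (by positivity)]
            nlinarith [sq_nonneg (s - u), mul_le_mul_of_nonneg_left hsu
              (by positivity : (0:ℝ) ≤ s + u), mul_pos h2 h3]
          have k2 : 12 * (1 + 1 / t) ^ 2 ≤ 12 * (1 / (1 - α)) + 12 / (α * D) := by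
            have key : 12 * (1 / (1 - α)) + 12 / (α * D)
                = 12 * (1 + 1 / t) ^ 2
                  + 12 * (1 - α * (1 + t)) ^ 2 / ((1 - α) * (α * t ^ 2)) := by
              rw [← ht2]
              field_simp
              ring
            have hpos : (0:ℝ) ≤ 12 * (1 - α * (1 + t)) ^ 2 / ((1 - α) * (α * t ^ 2)) :=
              div_nonneg (by positivity)
                (le_of_lt (mul_pos h1 (mul_pos hα0 (by positivity))))
            linarith [key, hpos]
          linarith [k1, k2]
        · rw [barrier_of_nonpos h3]; simp
      · rw [barrier_of_nonpos h2]; simp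
    · rw [barrier_of_nonpos h1]; simp
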